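/- Let X, Y, W ∈ ℝ[t] with W ≠ 0, define U := X'·W − X·W' and V := Y'·W − Y·W', and assume (U,V) ≠ (0,0). Let ν := gcd(U,V), Û := U/ν, V̂ := V/ν. Let d > 0 and let t₀ ∈ ℝ satisfy W(t₀) ≠ 0 and U(t₀) = V(t₀) = 0. Let α₀ ∈ ℝ with α₀² = Û(t₀)² + V̂(t₀)² and α₀ ≠ 0, and set x₀ := X(t₀)/W(t₀) + d·V̂(t₀)/α₀ and y₀ := Y(t₀)/W(t₀) − d·Û(t₀)/α₀ (the offset point generated by t₀). Define the univariate polynomial P̂ := Û·(W·x₀ − X) + V̂·(W·y₀ − Y) ∈ ℝ[t]. Then P̂(t₀) = 0, and t₀ is a root of P̂ of multiplicity at least 2 (i.e., P̂'(t₀) = 0) if and only if Û(t₀)·V̂'(t₀) − V̂(t₀)·Û'(t₀) = 0. -/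

import Mathlib

theorem stmt12 (X Y W U V ν Uh Vh : Polynomial ℝ) (hWne : W ≠ 0)
    (hU : U = Polynomial.derivative X * W - X * Polynomial.derivative W)
    (hV : V = Polynomial.derivative Y * W - Y * Polynomial.derivative W)
    (hUV : ¬(U = 0 ∧ V = 0))
    (hν : ν = gcd U V) (hUh : U = ν * Uh) (hVh : V = ν * Vh)
    (d : ℝ) (hd : 0 < d)
    (t₀ : ℝ) (hWt : W.eval t₀ ≠ 0) (hUt : U.eval t₀ = 0) (hVt : V.eval t₀ = 0)
    (α₀ : ℝ) (hα : α₀ ^ 2 = (Uh.eval t₀) ^ 2 + (Vh.eval t₀) ^ 2) (hα0 : α₀ ≠ 0)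
    (x₀ y₀ : ℝ)
    (hx₀ : x₀ = X.eval t₀ / W.eval t₀ + d * Vh.eval t₀ / α₀)
    (hy₀ : y₀ = Y.eval t₀ / W.eval t₀ - d * Uh.eval t₀ / α₀)
    (Phat : Polynomial ℝ)
    (hPhat : Phat = Uh * (Polynomial.C x₀ * W - X) + Vh * (Polynomial.C y₀ * W - Y)) :
    Phat.eval t₀ = 0 ∧
    ((Polynomial.derivative Phat).eval t₀ = 0 ↔
      Uh.eval t₀ * (Polynomial.derivative Vh).eval t₀ -
        Vh.eval t₀ * (Polynomial.derivative Uh).eval t₀ = 0) := by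
  have eq1 : (Polynomial.derivative X).eval t₀ * W.eval t₀
      = X.eval t₀ * (Polynomial.derivative W).eval t₀ := by
    rw [hU] at hUt; simp at hUt; linarith
  have eq2 : (Polynomial.derivative Y).eval t₀ * W.eval t₀
      = Y.eval t₀ * (Polynomial.derivative W).eval t₀ := by
    rw [hV] at hVt; simp at hVt; linarith
  have hP0 : Phat.eval t₀ = 0 := by
    subst hPhat hx₀ hy₀
    simp only [Polynomial.eval_add, Polynomial.eval_mul, Polynomial.eval_sub,
      Polynomial.eval_C]
    field_simp
    ring
  have key : (Polynomial.derivative Phat).eval t₀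
      = (d * W.eval t₀ / α₀) *
        (Vh.eval t₀ * (Polynomial.derivative Uh).eval t₀ -
          Uh.eval t₀ * (Polynomial.derivative Vh).eval t₀) := by
    subst hPhat hx₀ hy₀
    simp only [Polynomial.derivative_add, Polynomial.derivative_mul,
      Polynomial.derivative_sub, Polynomial.derivative_C, Polynomial.eval_add,
      Polynomial.eval_mul, Polynomial.eval_sub, Polynomial.eval_C, zero_mul, zero_add]
    field_simp
    linear_combination (-(α₀ * Uh.eval t₀)) * eq1 + (-(α₀ * Vh.eval t₀)) * eq2
  constructor
  · exact hP0
  · rw [key]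
    have hne : d * W.eval t₀ / α₀ ≠ 0 := by
      apply div_ne_zero (mul_ne_zero (ne_of_gt hd) hWt) hα0
    constructor
    · intro h
      have := (mul_eq_zero.mp h).resolve_left hne
      linarith
    · intro h
      have : Vh.eval t₀ * (Polynomial.derivative Uh).eval t₀ -
          Uh.eval t₀ * (Polynomial.derivative Vh).eval t₀ = 0 := by linarith
      rw [this, mul_zero]
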